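/- Horospherical projections commute with the Poincaré-to-Lorentz map: for every ideal point ṽ ∈ S^{d−1}, letting v = (0, ṽ), one has P_{B→L}(P̃^{ṽ}(x)) = P̃^v(P_{B→L}(x)) for all x ∈ B^d, where P̃^{ṽ}(x) = ((1−‖x‖₂²−‖ṽ−x‖₂²)/(1−‖x‖₂²+‖ṽ−x‖₂²))·ṽ and P̃^v(y) = −(1/(2⟨y,x⁰+v⟩_L))((1+⟨y,x⁰+v⟩_L²)x⁰ + (1−⟨y,x⁰+v⟩_L²)v). -/
import Mathlib


open MeasureTheory

noncomputable def arcosh (x : ℝ) : ℝ := Real.log (x + Real.sqrt (x^2 - 1))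

noncomputable def mink (d : ℕ) (x y : Fin (d+1) → ℝ) : ℝ :=
  -(x 0 * y 0) + ∑ i : Fin d, x i.succ * y i.succ

def LorentzSet (d : ℕ) : Set (Fin (d+1) → ℝ) :=
  {x | mink d x x = -1 ∧ 0 < x 0}

noncomputable def dL (d : ℕ) (x y : Fin (d+1) → ℝ) : ℝ :=
  arcosh (-(mink d x y))

noncomputable def lorOrigin (d : ℕ) : Fin (d+1) → ℝ := fun i => if i = 0 then 1 else 0


/-- Squared Euclidean norm. -/
noncomputable def nsq (d : ℕ) (x : Fin d → ℝ) : ℝ := ∑ i, (x i)^2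

/-- The Poincaré ball. -/
def BallSet (d : ℕ) : Set (Fin d → ℝ) := {x | nsq d x < 1}

/-- Poincaré ball distance. -/
noncomputable def dB (d : ℕ) (x y : Fin d → ℝ) : ℝ :=
  arcosh (1 + 2 * nsq d (x - y) / ((1 - nsq d x) * (1 - nsq d y)))

/-- The map from the Poincaré ball to the Lorentz model. -/
noncomputable def PBL (d : ℕ) (x : Fin d → ℝ) : Fin (d+1) → ℝ :=
  Fin.cons ((1 + nsq d x) / (1 - nsq d x)) (fun i => 2 * x i / (1 - nsq d x))

/-- The map from the Lorentz model to the Poincaré ball. -/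
noncomputable def PLB (d : ℕ) (y : Fin (d+1) → ℝ) : Fin d → ℝ :=
  fun i => y i.succ / (1 + y 0)

/-- Horospherical projection in the Poincaré ball, onto the geodesic towards the
ideal point `ṽ`. -/
noncomputable def PtB (d : ℕ) (vt x : Fin d → ℝ) : Fin d → ℝ := fun i =>
  ((1 - nsq d x - nsq d (vt - x)) / (1 - nsq d x + nsq d (vt - x))) * vt i

/-- Horospherical projection in the Lorentz model, onto the geodesic with
direction `v`. -/
noncomputable def PtL (d : ℕ) (v y : Fin (d+1) → ℝ) : Fin (d+1) → ℝ := fun i =>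
  -(1 / (2 * mink d y (fun j => lorOrigin d j + v j))) *
    ((1 + (mink d y (fun j => lorOrigin d j + v j))^2) * lorOrigin d i +
      (1 - (mink d y (fun j => lorOrigin d j + v j))^2) * v i)

/-- horospherical projections commute with the Poincaré-to-Lorentz
map. -/
theorem horospherical_projections_commute (d : ℕ) (vt : Fin d → ℝ)
    (hvt : nsq d vt = 1) (x : Fin d → ℝ) (hx : x ∈ BallSet d) :
    PBL d (PtB d vt x) = PtL d (Fin.cons 0 vt) (PBL d x) := by
  have hs1 : nsq d x < 1 := hx
  set s := nsq d x with hs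
  set r := nsq d (vt - x) with hr
  set t := ∑ i : Fin d, vt i * x i with ht
  have hA : (0:ℝ) < 1 - s := by linarith
  have hrt : r = 1 - 2*t + s := by
    have h1 : r + 2*t = 1 + s := by
      rw [hr, hs, ht, ← hvt]
      simp only [nsq, Pi.sub_apply, Finset.mul_sum]
      rw [← Finset.sum_add_distrib, ← Finset.sum_add_distrib]
      apply Finset.sum_congr rfl
      intros; ring
    linarith
  have hvtsum : ∑ i : Fin d, (vt i)^2 = 1 := by simpa [nsq] using hvt
  have hr0 : 0 ≤ r := by
    rw [hr]; exact Finset.sum_nonneg fun i _ => sq_nonneg _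
  have hrne : 0 < r := by
    rcases lt_or_eq_of_le hr0 with h | h
    · exact h
    have h0 : ∑ i : Fin d, ((vt - x) i)^2 = 0 := by
      have : nsq d (vt - x) = 0 := by rw [← hr, ← h]
      simpa [nsq] using this
    have hz' : ∀ i ∈ Finset.univ, ((vt - x) i)^2 = 0 :=
      (Finset.sum_eq_zero_iff_of_nonneg (fun i _ => sq_nonneg ((vt - x) i))).mp h0
    have hvx : vt = x := by
      funext i
      have := hz' i (Finset.mem_univ i)
      have := pow_eq_zero_iff (n := 2) (by norm_num) |>.mp this
      simpa [sub_eq_zero] using this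
    rw [hvx, ← hs] at hvt
    linarith
  have hAr : (0:ℝ) < 1 - s + r := by linarith
  set L : ℝ := (1 - s - r) / (1 - s + r) with hLdef
  have hL : PtB d vt x = fun i => L * vt i := by
    funext i
    simp only [PtB, ← hs, ← hr, hLdef]
  have hnsqP : nsq d (PtB d vt x) = L^2 := by
    rw [hL]
    simp only [nsq, mul_pow, ← Finset.mul_sum, hvtsum, mul_one]
  have hL1 : L^2 < 1 := by
    rw [hLdef, div_pow, div_lt_one (by positivity)]
    nlinarith
  have hL1' : 1 - L^2 ≠ 0 := by linarith
  have hmink : mink d (PBL d x) (fun j => lorOrigin d j + (Fin.cons 0 vt : Fin (d+1) → ℝ) j)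
      = -r / (1 - s) := by
    simp only [mink, PBL, lorOrigin, Fin.cons_zero, Fin.cons_succ,
      Fin.succ_ne_zero, if_true, if_false, ← hs]
    have hsum : ∑ i : Fin d, 2 * x i / (1 - s) * ((0:ℝ) + vt i) = 2*t/(1-s) := by
      rw [ht, Finset.mul_sum, Finset.sum_div]
      apply Finset.sum_congr rfl
      intros; ring
    rw [hsum, hrt]
    field_simp [hA.ne', hrne.ne', hAr.ne']
    ring
  have hmne : (-r / (1 - s)) ≠ 0 := by
    apply div_ne_zero
    · linarith
    · linarith
  funext i
  refine Fin.cases ?_ ?_ i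
  · show PBL d (PtB d vt x) 0 = PtL d (Fin.cons 0 vt) (PBL d x) 0
    simp only [PtL, hmink]
    simp only [PBL, Fin.cons_zero, hnsqP, lorOrigin, if_true]
    have h2r : (2:ℝ) * (1 - s) * r ≠ 0 := by positivity
    have e1 : (1 + L^2)/(1 - L^2) = ((1-s)^2 + r^2)/(2*(1-s)*r) := by
      rw [div_eq_div_iff hL1' h2r, hLdef]
      field_simp [hAr.ne']
      ring
    rw [e1]
    field_simp [hA.ne', hrne.ne']
    ring
  · intro j
    show PBL d (PtB d vt x) j.succ = PtL d (Fin.cons 0 vt) (PBL d x) j.succ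
    simp only [PtL, hmink]
    rw [hL]
    have hnsq2 : nsq d (fun i => L * vt i) = L^2 := by
      simp only [nsq, mul_pow, ← Finset.mul_sum, hvtsum, mul_one]
    simp only [PBL, Fin.cons_succ, hnsq2, lorOrigin, Fin.succ_ne_zero,
      if_false]
    have h2r : (2:ℝ) * (1 - s) * r ≠ 0 := by positivity
    have e2 : 2*(L*vt j)/(1 - L^2) = ((1-s)^2 - r^2)*vt j/(2*(1-s)*r) := by
      rw [div_eq_div_iff hL1' h2r, hLdef]
      field_simp [hAr.ne']
      ring
    rw [e2]
    field_simp [hA.ne', hrne.ne']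
    ring
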